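/- arXiv:2604.12550 — 2 statements merged into one kernel-verified Lean document; each statement's English description precedes it below -/
import Mathlib

section
/- Let Q be a finite quandle. A representation ρ : Q → GL(V) of Q over ℂ is irreducible if and only if there exist a character χ of Q and an irreducible group representation σ : G(Q) → GL(V) whose image is a finite subgroup of GL(V), such that ρ(x) = χ(x) σ(φ_Q(x)) for all x ∈ Q. -/
open scoped Quandles
/-- The inner automorphism group of a rack/quandle `Q`: the subgroup of permutations
of `Q` generated by the left translations `L_x = Rack.act' x`. -/
def QdlInn (Q : Type*) [Rack Q] : Subgroup (Equiv.Perm Q) :=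
  Subgroup.closure (Set.range (Rack.act' (R := Q)))

/-- The quandle morphism `θ : Q → Conj (Inn Q)`, `x ↦ L_x`. -/
def QdlTheta (Q : Type*) [Rack Q] : ShelfHom Q (Quandle.Conj (QdlInn Q)) where
  toFun x := ⟨Rack.act' x, Subgroup.subset_closure ⟨x, rfl⟩⟩
  map_act' := by
    intro x y
    simp only [Quandle.conj_act_eq_conj]
    exact Subtype.ext (Rack.ad_conj x y)

/-- The induced group morphism `θ_{G(Q)} : G(Q) → Inn(Q)`. -/
def QdlThetaG (Q : Type*) [Rack Q] : Rack.EnvelGroup Q →* QdlInn Q :=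
  Rack.toEnvelGroup.map (QdlTheta Q)

/-- `Z₀`, the kernel of `θ_{G(Q)}`. -/
def QdlZ0 (Q : Type*) [Rack Q] : Subgroup (Rack.EnvelGroup Q) :=
  (QdlThetaG Q).ker

section Reps

variable {Q : Type*} {V : Type*} [AddCommGroup V] [Module ℂ V]

/-- `ρ : Q → GL(V)` is a quandle (rack) representation: `ρ(x ◃ y) = ρ(x) ρ(y) ρ(x)⁻¹`. -/
def IsQdlRep [Shelf Q] (ρ : Q → (V →ₗ[ℂ] V)ˣ) : Prop :=
  ∀ x y : Q, ρ (x ◃ y) = ρ x * ρ y * (ρ x)⁻¹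

/-- A family `ρ : Q → GL(V)` is irreducible if the only subspaces invariant
under all `ρ x` are `0` and `V`. -/
def QdlIrred (ρ : Q → (V →ₗ[ℂ] V)ˣ) : Prop :=
  ∀ W : Submodule ℂ V, (∀ x : Q, ∀ v ∈ W, (ρ x : V →ₗ[ℂ] V) v ∈ W) → W = ⊥ ∨ W = ⊤

/-- A group representation `σ : G →* GL(V)` is irreducible if the only subspaces
invariant under all `σ g` are `0` and `V`. -/
def GrpIrred {G : Type*} [Group G] (σ : G →* (V →ₗ[ℂ] V)ˣ) : Prop :=
  ∀ W : Submodule ℂ V, (∀ g : G, ∀ v ∈ W, (σ g : V →ₗ[ℂ] V) v ∈ W) → W = ⊥ ∨ W = ⊤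

end Reps

/-- A character of a quandle: a map `χ : Q → ℂˣ` with `χ(x ◃ y) = χ(y)`. -/
def QdlChar {Q : Type*} [Shelf Q] (χ : Q → ℂˣ) : Prop :=
  ∀ x y : Q, χ (x ◃ y) = χ y


section AuxEnvel

/-- Every element of the enveloping group lies in the closure of the image of the rack. -/
theorem stmt16_envel_mem_closure {Q : Type*} [Rack Q] (g : Rack.EnvelGroup Q) :
    g ∈ Subgroup.closure (Set.range fun x : Q => (Rack.toEnvelGroup Q x : Rack.EnvelGroup Q)) := by
  induction g using Quotient.inductionOn with
  | h a =>
    induction a with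
    | unit => exact one_mem _
    | incl x => exact Subgroup.subset_closure ⟨x, rfl⟩
    | mul a b iha ihb => exact mul_mem iha ihb
    | inv a iha => exact inv_mem iha

theorem stmt16_envel_hom_ext {Q : Type*} [Rack Q] {G : Type*} [Group G]
    (f g : Rack.EnvelGroup Q →* G)
    (h : ∀ x : Q, f (Rack.toEnvelGroup Q x) = g (Rack.toEnvelGroup Q x)) : f = g := by
  have hg := Rack.toEnvelGroup.univ_uniq Q G
    ((Quandle.Conj.map g).comp (Rack.toEnvelGroup Q)) g rfl
  have hf := Rack.toEnvelGroup.univ_uniq Q G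
    ((Quandle.Conj.map g).comp (Rack.toEnvelGroup Q)) f (by ext x; exact (h x).symm)
  exact hf.trans hg.symm

end AuxEnvel

section AuxSchur

universe uV

theorem stmt16_aeval_ne_zero {V : Type uV} [AddCommGroup V] [Module ℂ V] (L : V →ₗ[ℂ] V)
    (hinj : ∀ c : ℂ, Function.Injective (L - c • (LinearMap.id : V →ₗ[ℂ] V)))
    {v : V} (hv : v ≠ 0) : ∀ p : Polynomial ℂ, p ≠ 0 → (Polynomial.aeval L p) v ≠ 0 := by
  suffices H : ∀ n : ℕ, ∀ p : Polynomial ℂ, p ≠ 0 → p.natDegree = n →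
      (Polynomial.aeval L p) v ≠ 0 by
    intro p hp; exact H p.natDegree p hp rfl
  intro n
  induction n using Nat.strong_induction_on with
  | _ n ih =>
  intro p hp hn
  rcases Nat.eq_zero_or_pos n with h0 | hpos
  · subst h0
    obtain ⟨a, rfl⟩ := Polynomial.natDegree_eq_zero.mp hn
    have ha : a ≠ 0 := fun h => hp (by simp [h])
    have : (Polynomial.aeval L) (Polynomial.C a) v = a • v := by
      simp [Module.algebraMap_end_apply]
    rw [this]
    exact smul_ne_zero ha hv
  · have hdeg : p.degree ≠ 0 := by
      rw [Polynomial.degree_eq_natDegree hp, hn]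
      exact_mod_cast hpos.ne'
    obtain ⟨r, hr⟩ := IsAlgClosed.exists_root p hdeg
    obtain ⟨q, rfl⟩ := Polynomial.dvd_iff_isRoot.mpr hr
    have hX : (Polynomial.X - Polynomial.C r) ≠ 0 := Polynomial.X_sub_C_ne_zero r
    have hq : q ≠ 0 := fun h => hp (by simp [h])
    have hdq : q.natDegree < n := by
      rw [← hn, Polynomial.natDegree_mul hX hq, Polynomial.natDegree_X_sub_C]
      omega
    have hqv : (Polynomial.aeval L q) v ≠ 0 := ih _ hdq q hq rfl
    have heval : (Polynomial.aeval L) ((Polynomial.X - Polynomial.C r) * q) v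
        = (L - r • (LinearMap.id : V →ₗ[ℂ] V)) ((Polynomial.aeval L q) v) := by
      rw [map_mul]
      have h2 : (Polynomial.aeval L) (Polynomial.X - Polynomial.C r)
          = L - r • (LinearMap.id : V →ₗ[ℂ] V) := by
        simp [Module.algebraMap_end_eq_smul_id]
      rw [h2]
      rfl
    rw [heval]
    intro h
    exact hqv (hinj r (by simpa using h))

open Polynomial in
theorem stmt16_schur {V : Type uV} [AddCommGroup V] [Module ℂ V] [Nontrivial V]
    {ι : Type*} [Countable ι] (T : ι → V →ₗ[ℂ] V)
    (hirr : ∀ W : Submodule ℂ V, (∀ i, ∀ v ∈ W, T i v ∈ W) → W = ⊥ ∨ W = ⊤)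
    (u : (V →ₗ[ℂ] V)ˣ) (hu : ∀ i w, T i ((u : V →ₗ[ℂ] V) w) = (u : V →ₗ[ℂ] V) (T i w)) :
    ∃ c : ℂˣ, (u : V →ₗ[ℂ] V) = (c : ℂ) • (LinearMap.id : V →ₗ[ℂ] V) := by
  classical
  obtain ⟨v₀, hv₀⟩ := exists_ne (0 : V)
  set L : V →ₗ[ℂ] V := (u : V →ₗ[ℂ] V) with hLdef
  have hLinj : Function.Injective L := by
    intro a b hab
    have : ((u⁻¹ : (V →ₗ[ℂ] V)ˣ) : V →ₗ[ℂ] V) (L a)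
        = ((u⁻¹ : (V →ₗ[ℂ] V)ˣ) : V →ₗ[ℂ] V) (L b) := by rw [hab]
    simpa [hLdef, ← Module.End.mul_apply, Units.inv_mul] using this
  have hrank : Module.rank ℂ V ≤ Cardinal.aleph0 := by
    set S : Set V := Set.range (fun l : List ι => ((l.map T).prod) v₀) with hS
    have hvS : v₀ ∈ S := ⟨[], by simp⟩
    have hinv : ∀ i, ∀ w ∈ Submodule.span ℂ S, T i w ∈ Submodule.span ℂ S := by
      intro i w hw
      induction hw using Submodule.span_induction with
      | mem w hw =>
        obtain ⟨l, rfl⟩ := hw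
        exact Submodule.subset_span ⟨i :: l, by simp [Module.End.mul_apply]⟩
      | zero => simp
      | add a b _ _ ha hb => rw [map_add]; exact add_mem ha hb
      | smul a x _ hx => rw [map_smul]; exact Submodule.smul_mem _ _ hx
    rcases hirr _ hinv with h | h
    · exact absurd (h ▸ Submodule.subset_span hvS) (by simpa using hv₀)
    · calc Module.rank ℂ V = Module.rank ℂ (⊤ : Submodule ℂ V) := (rank_top ℂ V).symm
        _ = Module.rank ℂ (Submodule.span ℂ S) := by rw [h]
        _ ≤ Cardinal.mk S := rank_span_le S
        _ ≤ Cardinal.aleph0 := (Set.countable_range _).le_aleph0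
  by_cases hex : ∃ c : ℂ, L = c • (LinearMap.id : V →ₗ[ℂ] V)
  · obtain ⟨c, hc⟩ := hex
    have hc0 : c ≠ 0 := by
      rintro rfl
      apply hv₀
      have : L v₀ = 0 := by rw [hc]; simp
      exact hLinj (by simpa using this)
    exact ⟨Units.mk0 c hc0, hc⟩
  · exfalso
    push_neg at hex
    have hbij : ∀ c : ℂ, Function.Bijective (L - c • (LinearMap.id : V →ₗ[ℂ] V)) := by
      intro c
      set Lc := L - c • (LinearMap.id : V →ₗ[ℂ] V) with hLc
      have hcomm : ∀ i w, T i (Lc w) = Lc (T i w) := by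
        intro i w
        simp only [hLc, LinearMap.sub_apply, LinearMap.smul_apply, LinearMap.id_apply,
          map_sub, map_smul, hu]
      constructor
      · rw [← LinearMap.ker_eq_bot]
        rcases hirr (LinearMap.ker Lc) (fun i v hv => by
            rw [LinearMap.mem_ker] at hv ⊢; rw [← hcomm i v, hv, map_zero]) with h | h
        · exact h
        · exfalso
          apply hex c
          ext w
          have hw0 : Lc w = 0 := by
            have : w ∈ LinearMap.ker Lc := h.symm ▸ Submodule.mem_top
            simpa using this
          have := sub_eq_zero.mp (by simpa [hLc] using hw0)
          simpa using this
      · rw [← LinearMap.range_eq_top]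
        rcases hirr (LinearMap.range Lc) (fun i v hv => by
            obtain ⟨z, rfl⟩ := hv
            exact ⟨T i z, (hcomm i z).symm⟩) with h | h
        · exfalso
          apply hex c
          ext w
          have hw0 : Lc w = 0 := by
            have : Lc w ∈ LinearMap.range Lc := LinearMap.mem_range_self _ w
            rw [h] at this
            simpa using this
          have := sub_eq_zero.mp (by simpa [hLc] using hw0)
          simpa using this
        · exact h
    have hinj : ∀ c : ℂ, Function.Injective (L - c • (LinearMap.id : V →ₗ[ℂ] V)) :=
      fun c => (hbij c).1
    set e : ℂ → (V ≃ₗ[ℂ] V) := fun c => LinearEquiv.ofBijective _ (hbij c) with he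
    set w : ℂ → V := fun c => (e c).symm v₀ with hwdef
    have hwc : ∀ c, (L - c • (LinearMap.id : V →ₗ[ℂ] V)) (w c) = v₀ := by
      intro c
      have := (e c).apply_symm_apply v₀
      simpa [he, hwdef] using this
    have hli : LinearIndependent ℂ w := by
      rw [linearIndependent_iff']
      intro s g hsum i his
      by_contra hgi
      set p : Polynomial ℂ :=
        ∑ k ∈ s, Polynomial.C (g k) * ∏ j ∈ s.erase k, (X - Polynomial.C j) with hp
      have hpeval : p.eval i ≠ 0 := by
        rw [hp]
        rw [eval_finset_sum]
        rw [Finset.sum_eq_single_of_mem i his]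
        · simp only [eval_mul, eval_C, eval_prod, eval_sub, eval_X]
          refine mul_ne_zero hgi (Finset.prod_ne_zero_iff.mpr ?_)
          intro j hj
          have : j ≠ i := (Finset.mem_erase.mp hj).1
          exact sub_ne_zero_of_ne (Ne.symm this)
        · intro k hk hki
          simp only [eval_mul, eval_C, eval_prod, eval_sub, eval_X]
          apply mul_eq_zero_of_right
          apply Finset.prod_eq_zero (Finset.mem_erase.mpr ⟨Ne.symm hki, his⟩)
          simp
      have hpne : p ≠ 0 := fun h => hpeval (by rw [h]; simp)
      apply stmt16_aeval_ne_zero L hinj hv₀ p hpne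
      have key : ∀ k ∈ s, ((Polynomial.aeval L) (∏ j ∈ s, (X - Polynomial.C j))) (w k)
          = ((Polynomial.aeval L) (∏ j ∈ s.erase k, (X - Polynomial.C j))) v₀ := by
        intro k hk
        rw [← Finset.prod_erase_mul s _ hk, map_mul, Module.End.mul_apply]
        congr 1
        have : (Polynomial.aeval L) (X - Polynomial.C k)
            = L - k • (LinearMap.id : V →ₗ[ℂ] V) := by
          simp [Module.algebraMap_end_eq_smul_id]
        rw [this, hwc k]
      have lhs : ((Polynomial.aeval L) p) v₀
          = ((Polynomial.aeval L) (∏ j ∈ s, (X - Polynomial.C j)))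
            (∑ k ∈ s, g k • w k) := by
        calc ((Polynomial.aeval L) p) v₀
            = ∑ k ∈ s, g k • ((Polynomial.aeval L) (∏ j ∈ s.erase k, (X - Polynomial.C j))) v₀ := by
              rw [hp, map_sum, LinearMap.sum_apply]
              refine Finset.sum_congr rfl fun k hk => ?_
              rw [map_mul, Module.End.mul_apply, aeval_C, Module.algebraMap_end_apply]
          _ = ∑ k ∈ s, g k • ((Polynomial.aeval L) (∏ j ∈ s, (X - Polynomial.C j))) (w k) := by
              refine Finset.sum_congr rfl fun k hk => ?_
              rw [key k hk]
          _ = ((Polynomial.aeval L) (∏ j ∈ s, (X - Polynomial.C j))) (∑ k ∈ s, g k • w k) := by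
              rw [map_sum]
              refine Finset.sum_congr rfl fun k hk => ?_
              rw [map_smul]
      rw [lhs, hsum, map_zero]
    have hcard := hli.cardinal_lift_le_rank
    rw [Cardinal.mk_complex, Cardinal.lift_continuum] at hcard
    have h1 : Cardinal.lift.{0} (Module.rank ℂ V) ≤ Cardinal.aleph0 :=
      (Cardinal.lift_le.mpr hrank).trans_eq Cardinal.lift_aleph0
    exact absurd (hcard.trans h1) (not_le_of_gt Cardinal.aleph0_lt_continuum)

end AuxSchur

section AuxInvariance

/-- Invariance under the generators propagates to the whole enveloping group,
provided the representation has finite image. -/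
theorem stmt16_invariance {Q : Type*} [Rack Q] {V : Type*} [AddCommGroup V] [Module ℂ V]
    (σ : Rack.EnvelGroup Q →* (V →ₗ[ℂ] V)ˣ) (hfin : Finite σ.range)
    (W : Submodule ℂ V)
    (hW : ∀ x : Q, ∀ v ∈ W, (σ (Rack.toEnvelGroup Q x) : V →ₗ[ℂ] V) v ∈ W) :
    ∀ g, ∀ v ∈ W, (σ g : V →ₗ[ℂ] V) v ∈ W := by
  have hpow : ∀ u : (V →ₗ[ℂ] V)ˣ, (∀ v ∈ W, (u : V →ₗ[ℂ] V) v ∈ W) →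
      ∀ k : ℕ, ∀ v ∈ W, ((u ^ k : (V →ₗ[ℂ] V)ˣ) : V →ₗ[ℂ] V) v ∈ W := by
    intro u hu k
    induction k with
    | zero => intro v hv; simpa using hv
    | succ k ih =>
      intro v hv
      have hval : ((u ^ (k + 1) : (V →ₗ[ℂ] V)ˣ) : V →ₗ[ℂ] V) v
          = ((u ^ k : (V →ₗ[ℂ] V)ˣ) : V →ₗ[ℂ] V) ((u : V →ₗ[ℂ] V) v) := by
        rw [pow_succ, Units.val_mul, Module.End.mul_apply]
      rw [hval]
      exact ih _ (hu v hv)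
  have hinvcase : ∀ g : Rack.EnvelGroup Q, (∀ v ∈ W, (σ g : V →ₗ[ℂ] V) v ∈ W) →
      ∀ v ∈ W, (((σ g)⁻¹ : (V →ₗ[ℂ] V)ˣ) : V →ₗ[ℂ] V) v ∈ W := by
    intro g hg
    set t : σ.range := ⟨σ g, ⟨g, rfl⟩⟩ with ht
    have hm : (σ g) ^ (orderOf t) = 1 := by
      have := pow_orderOf_eq_one t
      have h2 := congrArg (Subgroup.subtype σ.range) this
      rw [map_pow, map_one] at h2
      exact h2
    have hpos : 0 < orderOf t := orderOf_pos t
    have hi : (σ g)⁻¹ = (σ g) ^ (orderOf t - 1) := by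
      apply inv_eq_of_mul_eq_one_right
      rw [← pow_succ']
      have : orderOf t - 1 + 1 = orderOf t := Nat.succ_pred_eq_of_pos hpos
      rw [this, hm]
    intro v hv
    rw [hi]
    exact hpow _ hg _ v hv
  intro g
  have hg : g ∈ Subgroup.closure
      (Set.range fun x : Q => (Rack.toEnvelGroup Q x : Rack.EnvelGroup Q)) :=
    stmt16_envel_mem_closure g
  induction hg using Subgroup.closure_induction with
  | mem x hx => obtain ⟨y, rfl⟩ := hx; exact hW y
  | one => intro v hv; simpa using hv
  | mul a b ha hb hA hB =>
    intro v hv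
    have : (σ (a * b) : V →ₗ[ℂ] V) v = (σ a : V →ₗ[ℂ] V) ((σ b : V →ₗ[ℂ] V) v) := by
      rw [map_mul, Units.val_mul, Module.End.mul_apply]
    rw [this]
    exact hA _ (hB _ hv)
  | inv a ha hA =>
    intro v hv
    have : (σ a⁻¹ : V →ₗ[ℂ] V) v = (((σ a)⁻¹ : (V →ₗ[ℂ] V)ˣ) : V →ₗ[ℂ] V) v := by rw [map_inv]
    rw [this]
    exact hinvcase a hA v hv

end AuxInvariance

set_option maxHeartbeats 3000000 in
/-- a representation of a finite quandle `Q` is irreducible iff it is the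
product of a character of `Q` and an irreducible representation of `G(Q)` with finite image. -/
theorem stmt16 (Q : Type*) [Quandle Q] [Finite Q]
    (V : Type*) [AddCommGroup V] [Module ℂ V]
    (ρ : Q → (V →ₗ[ℂ] V)ˣ) (hρ : IsQdlRep ρ) :
    QdlIrred ρ ↔
      ∃ (χ : Q → ℂˣ) (σ : Rack.EnvelGroup Q →* (V →ₗ[ℂ] V)ˣ),
        QdlChar χ ∧ GrpIrred σ ∧ Finite σ.range ∧
        ∀ x : Q, (ρ x : V →ₗ[ℂ] V) = (χ x : ℂ) • (σ (Rack.toEnvelGroup Q x) : V →ₗ[ℂ] V) := by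
  classical
  constructor
  · intro hirr
    rcases subsingleton_or_nontrivial V with hV | hV
    · refine ⟨fun _ => 1, 1, fun _ _ => rfl, ?_, ?_, ?_⟩
      · intro W _
        left
        exact Subsingleton.elim W ⊥
      · infer_instance
      · intro x
        exact Subsingleton.elim _ _
    -- main case
    obtain ⟨v₀, hv₀⟩ := exists_ne (0 : V)
    have huniq : ∀ c c' : ℂ, c • (LinearMap.id : V →ₗ[ℂ] V) = c' • LinearMap.id → c = c' := by
      intro c c' h
      have h2 : c • v₀ = c' • v₀ := by
        have := LinearMap.congr_fun h v₀
        simpa using this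
      exact smul_left_injective ℂ hv₀ h2
    set η : Q → Rack.EnvelGroup Q := fun x => Rack.toEnvelGroup Q x with hη
    set S : Set ((V →ₗ[ℂ] V)ˣ) := Set.range ρ with hSdef
    have hSfin : S.Finite := Set.finite_range ρ
    set H : Subgroup ((V →ₗ[ℂ] V)ˣ) := Subgroup.closure S with hHdef
    have hmem : ∀ x : Q, ρ x ∈ H := fun x => Subgroup.subset_closure ⟨x, rfl⟩
    set ρ0 : Q →◃ Quandle.Conj H :=
      { toFun := fun x => (⟨ρ x, hmem x⟩ : H)
        map_act' := by
          intro x y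
          rw [Quandle.conj_act_eq_conj]
          exact Subtype.ext (by push_cast; exact hρ x y) } with hρ0
    set ρb : Rack.EnvelGroup Q →* H := Rack.toEnvelGroup.map ρ0 with hρb
    have hρbx : ∀ x : Q, ρb (η x) = ⟨ρ x, hmem x⟩ := fun x => rfl
    -- conjugation stability of S under H
    have hstab : ∀ h ∈ H, ∀ s ∈ S, h * s * h⁻¹ ∈ S ∧ h⁻¹ * s * h ∈ S := by
      intro h hh
      induction hh using Subgroup.closure_induction with
      | mem e he =>
        obtain ⟨x, rfl⟩ := he
        rintro s ⟨y, rfl⟩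
        constructor
        · exact ⟨x ◃ y, by rw [hρ x y]⟩
        · refine ⟨x ◃⁻¹ y, ?_⟩
          have h1 : ρ (x ◃ (x ◃⁻¹ y)) = ρ x * ρ (x ◃⁻¹ y) * (ρ x)⁻¹ := hρ _ _
          rw [Rack.act_invAct_eq] at h1
          rw [h1]
          group
      | one =>
        intro s hs
        constructor <;> simpa using hs
      | mul a b ha hb hA hB =>
        intro s hs
        constructor
        · have h1 := (hA _ (hB s hs).1).1
          have heq : a * b * s * (a * b)⁻¹ = a * (b * s * b⁻¹) * a⁻¹ := by group
          rw [heq]; exact h1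
        · have h1 := (hB _ (hA s hs).2).2
          have heq : (a * b)⁻¹ * s * (a * b) = b⁻¹ * (a⁻¹ * s * a) * b := by group
          rw [heq]; exact h1
      | inv a ha hA =>
        intro s hs
        constructor
        · have h1 := (hA s hs).2
          rw [inv_inv]
          exact h1
        · have h1 := (hA s hs).1
          rw [inv_inv]
          exact h1
    -- the quotient by the center is finite
    haveI : Finite ↥S := hSfin.to_subtype
    have hFin1 : Finite (↥H ⧸ Subgroup.center ↥H) := by
      set F : ↥H → (↥S → ↥S) := fun h s =>
        ⟨(h : (V →ₗ[ℂ] V)ˣ) * s * (h : (V →ₗ[ℂ] V)ˣ)⁻¹, (hstab h.1 h.2 s.1 s.2).1⟩ with hF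
      have hFcenter : ∀ h1 h2 : ↥H, F h1 = F h2 → h1⁻¹ * h2 ∈ Subgroup.center ↥H := by
        intro h1 h2 hF12
        have hcomm : ∀ s ∈ S, s * (h1.1⁻¹ * h2.1) = (h1.1⁻¹ * h2.1) * s := by
          intro s hs
          have hval : h1.1 * s * h1.1⁻¹ = h2.1 * s * h2.1⁻¹ :=
            congrArg Subtype.val (congrFun hF12 ⟨s, hs⟩)
          calc s * (h1.1⁻¹ * h2.1) = h1.1⁻¹ * (h1.1 * s * h1.1⁻¹) * h2.1 := by group
            _ = h1.1⁻¹ * (h2.1 * s * h2.1⁻¹) * h2.1 := by rw [hval]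
            _ = (h1.1⁻¹ * h2.1) * s := by group
        have hle : H ≤ Subgroup.centralizer {((h1⁻¹ * h2 : ↥H) : (V →ₗ[ℂ] V)ˣ)} := by
          show Subgroup.closure S ≤ _
          apply (Subgroup.closure_le _).mpr
          intro s hs
          rw [SetLike.mem_coe, Subgroup.mem_centralizer_iff]
          rintro g hg
          rw [Set.mem_singleton_iff] at hg
          subst hg
          have := (hcomm s hs).symm
          simpa using this
        rw [Subgroup.mem_center_iff]
        intro k
        have hk := hle k.2
        rw [Subgroup.mem_centralizer_iff] at hk
        have h5 := hk _ (Set.mem_singleton _)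
        apply Subtype.ext
        push_cast at h5 ⊢
        exact h5.symm
      refine Finite.of_injective (fun q : ↥H ⧸ Subgroup.center ↥H => F q.out) ?_
      intro q1 q2 h12
      rw [← QuotientGroup.out_eq' q1, ← QuotientGroup.out_eq' q2]
      exact QuotientGroup.eq.mpr (hFcenter _ _ h12)
    haveI : Finite (↥H ⧸ Subgroup.center ↥H) := hFin1
    haveI hFI : (Subgroup.center ↥H).FiniteIndex :=
      Subgroup.finiteIndex_of_finite_quotient
    -- Schur: central elements are scalars
    have hcen : ∀ z : ↥(Subgroup.center ↥H), ∃ c : ℂˣ,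
        (((z : ↥H) : (V →ₗ[ℂ] V)ˣ) : V →ₗ[ℂ] V) = (c : ℂ) • LinearMap.id := by
      intro z
      apply stmt16_schur (fun x : Q => (ρ x : V →ₗ[ℂ] V)) hirr ((z : ↥H) : (V →ₗ[ℂ] V)ˣ)
      intro x w
      have h1 : (⟨ρ x, hmem x⟩ : ↥H) * (z : ↥H) = (z : ↥H) * ⟨ρ x, hmem x⟩ :=
        Subgroup.mem_center_iff.mp z.2 _
      have h2 : ρ x * ((z : ↥H) : (V →ₗ[ℂ] V)ˣ) = ((z : ↥H) : (V →ₗ[ℂ] V)ˣ) * ρ x := by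
        have := congrArg Subtype.val h1
        simpa using this
      have h3 : (ρ x : V →ₗ[ℂ] V) * (((z : ↥H) : (V →ₗ[ℂ] V)ˣ) : V →ₗ[ℂ] V)
          = ((((z : ↥H) : (V →ₗ[ℂ] V)ˣ) : V →ₗ[ℂ] V)) * (ρ x : V →ₗ[ℂ] V) := by
        have := congrArg Units.val h2
        simpa using this
      calc (ρ x : V →ₗ[ℂ] V) ((((z : ↥H) : (V →ₗ[ℂ] V)ˣ) : V →ₗ[ℂ] V) w)
          = ((ρ x : V →ₗ[ℂ] V) * (((z : ↥H) : (V →ₗ[ℂ] V)ˣ) : V →ₗ[ℂ] V)) w := by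
            rw [Module.End.mul_apply]
        _ = (((((z : ↥H) : (V →ₗ[ℂ] V)ˣ) : V →ₗ[ℂ] V)) * (ρ x : V →ₗ[ℂ] V)) w := by rw [h3]
        _ = (((z : ↥H) : (V →ₗ[ℂ] V)ˣ) : V →ₗ[ℂ] V) ((ρ x : V →ₗ[ℂ] V) w) := by
            rw [Module.End.mul_apply]
    choose cf hcf using hcen
    -- scalar embedding
    set sc : ℂˣ →* (V →ₗ[ℂ] V)ˣ :=
      Units.map (algebraMap ℂ (V →ₗ[ℂ] V)).toMonoidHom with hscdef
    have hscval : ∀ c : ℂˣ, ((sc c : (V →ₗ[ℂ] V)ˣ) : V →ₗ[ℂ] V) = (c : ℂ) • LinearMap.id :=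
      fun c => rfl
    have hscinj : Function.Injective sc := by
      intro c d h
      apply Units.ext
      exact huniq _ _ (by rw [← hscval c, ← hscval d, h])
    have hc_central : ∀ (c : ℂˣ) (u : (V →ₗ[ℂ] V)ˣ), sc c * u = u * sc c := by
      intro c u
      apply Units.ext
      rw [Units.val_mul, Units.val_mul]
      exact Algebra.commutes (c : ℂ) (u : V →ₗ[ℂ] V)
    set ζ : ↥(Subgroup.center ↥H) →* ℂˣ :=
      { toFun := cf
        map_one' := by
          apply Units.ext
          apply huniq
          rw [← hcf 1]
          simp [Module.End.one_eq_id]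
        map_mul' := by
          intro z z'
          apply Units.ext
          apply huniq
          rw [← hcf (z * z')]
          have : (((z * z' : ↥(Subgroup.center ↥H)) : ↥H) : (V →ₗ[ℂ] V)ˣ)
              = ((z : ↥H) : (V →ₗ[ℂ] V)ˣ) * ((z' : ↥H) : (V →ₗ[ℂ] V)ˣ) := by push_cast; rfl
          rw [this, Units.val_mul, hcf z, hcf z']
          rw [smul_mul_smul_comm]
          rw [Module.End.mul_eq_comp, LinearMap.id_comp]
          rfl } with hζdef
    have hζval : ∀ z : ↥(Subgroup.center ↥H), ((z : ↥H) : (V →ₗ[ℂ] V)ˣ) = sc (ζ z) := by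
      intro z
      apply Units.ext
      rw [hscval]
      exact hcf z
    set n : ℕ := (Subgroup.center ↥H).index with hn
    have hn0 : n ≠ 0 := hFI.index_ne_zero
    set τ : ↥H →* ↥(Subgroup.center ↥H) := MonoidHom.transferCenterPow ↥H with hτ
    have hτval : ∀ h : ↥H, ((τ h : ↥H) : (V →ₗ[ℂ] V)ˣ) = ((h : (V →ₗ[ℂ] V)ˣ)) ^ n := by
      intro h
      have h1 : ((τ h : ↥H)) = h ^ n := MonoidHom.transferCenterPow_apply h
      rw [h1]
      push_cast
      rfl
    set χt : Rack.EnvelGroup Q →* ℂˣ := ζ.comp (τ.comp ρb) with hχt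
    have hχtval : ∀ g, sc (χt g) = ((ρb g : ↥H) : (V →ₗ[ℂ] V)ˣ) ^ n := by
      intro g
      rw [hχt]
      simp only [MonoidHom.comp_apply]
      rw [← hζval (τ (ρb g)), hτval]
    -- n-th roots
    have hroot : ∀ c : ℂˣ, ∃ d : ℂˣ, d ^ n = c := by
      intro c
      obtain ⟨z, hz⟩ := IsAlgClosed.exists_pow_nat_eq (c : ℂ) (Nat.pos_of_ne_zero hn0)
      have hz0 : z ≠ 0 := by
        intro h
        apply c.ne_zero
        rw [← hz, h, zero_pow hn0]
      exact ⟨Units.mk0 z hz0, Units.ext (by simpa using hz)⟩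
    choose r hrr using hroot
    -- χt is conjugation invariant on generators
    have hηact : ∀ x y : Q, η (x ◃ y) = η x * η y * (η x)⁻¹ := by
      intro x y
      have h1 := (Rack.toEnvelGroup Q).map_act (x := x) (y := y)
      rw [Quandle.conj_act_eq_conj] at h1
      exact h1
    have hχtact : ∀ x y : Q, χt (η (x ◃ y)) = χt (η y) := by
      intro x y
      rw [hηact, map_mul, map_mul, map_inv, mul_comm (χt (η x)), mul_inv_cancel_right]
    set ψ0 : Q →◃ Quandle.Conj ℂˣ :=
      { toFun := fun x => r (χt (η x))
        map_act' := by
          intro x y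
          show r (χt (η (x ◃ y))) = Shelf.act (r (χt (η x))) (r (χt (η y)))
          rw [Quandle.conj_act_eq_conj, mul_comm (r (χt (η x))), mul_inv_cancel_right,
            hχtact] } with hψ0
    set ψ : Rack.EnvelGroup Q →* ℂˣ := Rack.toEnvelGroup.map ψ0 with hψdef
    have hψx : ∀ x : Q, ψ (η x) = r (χt (η x)) := fun x => rfl
    have hψn : ∀ g, (ψ g) ^ n = χt g := by
      have h1 : (powMonoidHom n : ℂˣ →* ℂˣ).comp ψ = χt := by
        apply stmt16_envel_hom_ext
        intro x
        simp only [MonoidHom.comp_apply, powMonoidHom_apply]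
        rw [hψx, hrr]
      intro g
      have := DFunLike.congr_fun h1 g
      simpa using this
    -- the representation σ
    set σ : Rack.EnvelGroup Q →* (V →ₗ[ℂ] V)ˣ :=
      { toFun := fun g => sc ((ψ g)⁻¹) * ((ρb g : ↥H) : (V →ₗ[ℂ] V)ˣ)
        map_one' := by simp
        map_mul' := by
          intro a b
          show sc ((ψ (a * b))⁻¹) * ((ρb (a * b) : ↥H) : (V →ₗ[ℂ] V)ˣ) = _
          rw [map_mul ψ, map_mul ρb, mul_inv, map_mul sc]
          have hcoe : ((ρb a * ρb b : ↥H) : (V →ₗ[ℂ] V)ˣ)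
              = ((ρb a : ↥H) : (V →ₗ[ℂ] V)ˣ) * ((ρb b : ↥H) : (V →ₗ[ℂ] V)ˣ) := rfl
          rw [hcoe]
          calc sc (ψ a)⁻¹ * sc (ψ b)⁻¹ *
                (((ρb a : ↥H) : (V →ₗ[ℂ] V)ˣ) * ((ρb b : ↥H) : (V →ₗ[ℂ] V)ˣ))
              = sc (ψ a)⁻¹ * (sc ((ψ b)⁻¹) * ((ρb a : ↥H) : (V →ₗ[ℂ] V)ˣ)) *
                ((ρb b : ↥H) : (V →ₗ[ℂ] V)ˣ) := by
                rw [map_inv]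
                group
            _ = sc (ψ a)⁻¹ * (((ρb a : ↥H) : (V →ₗ[ℂ] V)ˣ) * sc ((ψ b)⁻¹)) *
                ((ρb b : ↥H) : (V →ₗ[ℂ] V)ˣ) := by
                rw [hc_central ((ψ b)⁻¹) ((ρb a : ↥H) : (V →ₗ[ℂ] V)ˣ)]
            _ = (sc ((ψ a)⁻¹) * ((ρb a : ↥H) : (V →ₗ[ℂ] V)ˣ)) *
                (sc ((ψ b)⁻¹) * ((ρb b : ↥H) : (V →ₗ[ℂ] V)ˣ)) := by
                rw [map_inv]
                group } with hσdef
    have hσx : ∀ g, σ g = sc ((ψ g)⁻¹) * ((ρb g : ↥H) : (V →ₗ[ℂ] V)ˣ) := fun g => rfl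
    -- the formula
    have hform : ∀ x : Q, (ρ x : V →ₗ[ℂ] V)
        = ((ψ (η x) : ℂ)) • (σ (η x) : V →ₗ[ℂ] V) := by
      intro x
      have h1 : σ (η x) = sc ((ψ (η x))⁻¹) * ρ x := by
        rw [hσx, hρbx]
      rw [h1, Units.val_mul, hscval]
      ext w
      simp only [Module.End.mul_apply, LinearMap.smul_apply, LinearMap.id_apply,
        LinearMap.map_smul]
      rw [smul_smul]
      have : ((ψ (η x) : ℂ)) * (((ψ (η x))⁻¹ : ℂˣ) : ℂ) = 1 := by
        rw [← Units.val_mul, mul_inv_cancel, Units.val_one]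
      rw [this, one_smul]
    -- character property
    have hchar : QdlChar (fun x => ψ (η x)) := by
      intro x y
      show ψ (η (x ◃ y)) = ψ (η y)
      rw [hηact, map_mul, map_mul, map_inv, mul_comm (ψ (η x)), mul_inv_cancel_right]
    -- irreducibility of σ
    have hgrp : GrpIrred σ := by
      intro W hW
      apply hirr W
      intro x v hv
      have h1 := LinearMap.congr_fun (hform x) v
      rw [LinearMap.smul_apply] at h1
      rw [h1]
      exact Submodule.smul_mem _ _ (hW (η x) v hv)
    -- surjectivity of ρb
    have hsurj : Function.Surjective ρb := by
      rintro ⟨e, hmemH⟩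
      have hex : ∃ g, ((ρb g : ↥H) : (V →ₗ[ℂ] V)ˣ) = e := by
        induction hmemH using Subgroup.closure_induction with
        | mem e he =>
          obtain ⟨x, rfl⟩ := he
          exact ⟨η x, by rw [hρbx]⟩
        | one => exact ⟨1, by rw [map_one]; rfl⟩
        | mul a b ha hb hA hB =>
          obtain ⟨g1, hg1⟩ := hA
          obtain ⟨g2, hg2⟩ := hB
          refine ⟨g1 * g2, ?_⟩
          rw [map_mul]
          push_cast
          rw [hg1, hg2]
        | inv a ha hA =>
          obtain ⟨g1, hg1⟩ := hA
          refine ⟨g1⁻¹, ?_⟩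
          rw [map_inv]
          push_cast
          rw [hg1]
      obtain ⟨g, hg⟩ := hex
      exact ⟨g, Subtype.ext hg⟩
    set Z' : Subgroup (Rack.EnvelGroup Q) := (Subgroup.center ↥H).comap ρb with hZ'
    haveI hZfi : Z'.FiniteIndex := by
      constructor
      have h7 : Z'.index = (Subgroup.center ↥H).index :=
        (Subgroup.center ↥H).index_comap_of_surjective hsurj
      rw [h7]
      exact hFI.index_ne_zero
    haveI : Finite (Rack.EnvelGroup Q ⧸ Z') := Z'.finite_quotient_of_finiteIndex
    -- n-th roots of unity form a finite set
    have hKfin : ({c : ℂˣ | c ^ n = 1}).Finite := by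
      have h1 : ({z : ℂ | z ^ n = 1}).Finite := by
        have h2 : ((Polynomial.X : Polynomial ℂ) ^ n - Polynomial.C 1) ≠ 0 :=
          Polynomial.X_pow_sub_C_ne_zero (Nat.pos_of_ne_zero hn0) 1
        apply (Polynomial.finite_setOf_isRoot h2).subset
        intro z hz
        rw [Set.mem_setOf_eq] at hz
        simp only [Set.mem_setOf_eq, Polynomial.IsRoot, Polynomial.eval_sub,
          Polynomial.eval_pow, Polynomial.eval_X, Polynomial.eval_C, hz, sub_self]
      have h4 : ({c : ℂˣ | c ^ n = 1}) ⊆ Units.val ⁻¹' {z : ℂ | z ^ n = 1} := by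
        intro c hc
        rw [Set.mem_setOf_eq] at hc
        simp only [Set.mem_preimage, Set.mem_setOf_eq]
        rw [← Units.val_pow_eq_pow_val, hc, Units.val_one]
      exact (h1.preimage (Units.val_injective.injOn)).subset h4
    -- on Z' the representation σ is by roots of unity
    have hZ'img : ∀ z ∈ Z', ∃ c : ℂˣ, c ^ n = 1 ∧ σ z = sc c := by
      intro z hz
      have hzc : ρb z ∈ Subgroup.center ↥H := hz
      have h1 : ((ρb z : ↥H) : (V →ₗ[ℂ] V)ˣ) = sc (ζ ⟨ρb z, hzc⟩) := hζval ⟨ρb z, hzc⟩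
      refine ⟨(ψ z)⁻¹ * ζ ⟨ρb z, hzc⟩, ?_, ?_⟩
      · have h2 : (ζ ⟨ρb z, hzc⟩) ^ n = χt z := by
          apply hscinj
          rw [map_pow, ← h1, hχtval]
        rw [mul_pow, inv_pow, hψn, h2, inv_mul_cancel]
      · rw [hσx z, h1, ← map_mul]
    -- the range of σ is finite
    have hrange : (Set.range σ).Finite := by
      have hsub : Set.range σ ⊆ ⋃ (q : Rack.EnvelGroup Q ⧸ Z'),
          (fun c : ℂˣ => σ q.out * sc c) '' {c : ℂˣ | c ^ n = 1} := by
        rintro _ ⟨g, rfl⟩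
        apply Set.mem_iUnion.mpr
        refine ⟨QuotientGroup.mk g, ?_⟩
        have hzz : ((QuotientGroup.mk g : Rack.EnvelGroup Q ⧸ Z').out)⁻¹ * g ∈ Z' := by
          rw [← QuotientGroup.eq, QuotientGroup.out_eq']
        obtain ⟨c, hc1, hc2⟩ := hZ'img _ hzz
        refine ⟨c, hc1, ?_⟩
        show σ _ * sc c = σ g
        rw [← hc2, ← map_mul σ, mul_inv_cancel_left]
      apply Set.Finite.subset _ hsub
      apply Set.finite_iUnion
      intro q
      exact hKfin.image _
    have hfin : Finite ↥σ.range := by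
      have h6 : Finite ↥(Set.range σ) := hrange.to_subtype
      exact Finite.of_injective
        (fun x : ↥σ.range => (⟨x.1, x.2⟩ : ↥(Set.range σ)))
        (fun a b hab => Subtype.ext (congrArg Subtype.val hab))
    exact ⟨fun x => ψ (η x), σ, hchar, hgrp, hfin, fun x => hform x⟩
  · rintro ⟨χ, σ, hχ, hσ, hfin, hform⟩
    intro W hW
    apply hσ W
    apply stmt16_invariance σ hfin W
    intro x v hv
    have hx : (σ (Rack.toEnvelGroup Q x) : V →ₗ[ℂ] V) v
        = ((χ x : ℂ))⁻¹ • ((ρ x : V →ₗ[ℂ] V) v) := by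
      rw [hform x]
      rw [LinearMap.smul_apply, smul_smul, inv_mul_cancel₀ (Units.ne_zero (χ x)), one_smul]
    rw [hx]
    exact Submodule.smul_mem _ _ (hW x v hv)
end

section
/- Let Q be a finite quandle such that every ℂˣ-valued 2-cocycle on Inn(Q) (trivial action) is a 2-coboundary. Then Z₀ = ker θ_{G(Q)} is torsion-free: its only element of finite order is the identity. -/
open scoped Quandles
namespace Stmt17Aux

variable {Q : Type*} [Rack Q]

lemma tE_gen :
    Subgroup.closure (Set.range fun x : Q => (Rack.toEnvelGroup Q x : Rack.EnvelGroup Q)) = ⊤ := by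
  rw [eq_top_iff]
  rintro g -
  induction g using Quotient.inductionOn with
  | h a =>
    induction a with
    | unit => exact one_mem _
    | incl x => exact Subgroup.subset_closure ⟨x, rfl⟩
    | mul a b iha ihb => exact mul_mem iha ihb
    | inv a iha => exact inv_mem iha

lemma thetaG_tE (x : Q) : QdlThetaG Q (Rack.toEnvelGroup Q x) = QdlTheta Q x := rfl

lemma conj_tE (g : Rack.EnvelGroup Q) (x : Q) :
    g * Rack.toEnvelGroup Q x * g⁻¹ =
      Rack.toEnvelGroup Q ((QdlThetaG Q g : Equiv.Perm Q) x) := by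
  have hg : g ∈ Subgroup.closure
      (Set.range fun x : Q => (Rack.toEnvelGroup Q x : Rack.EnvelGroup Q)) := by
    rw [tE_gen]; trivial
  induction hg using Subgroup.closure_induction generalizing x with
  | mem g hg =>
    obtain ⟨y, rfl⟩ := hg
    have h1 : Rack.toEnvelGroup Q (y ◃ x) =
        Rack.toEnvelGroup Q y * Rack.toEnvelGroup Q x * (Rack.toEnvelGroup Q y)⁻¹ :=
      (Rack.toEnvelGroup Q).map_act' (x := y) (y := x)
    rw [← h1, thetaG_tE]
    show _ = Rack.toEnvelGroup Q (Rack.act' y x)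
    rw [Rack.act'_apply]
  | one => simp
  | mul a b ha hb iha ihb =>
    rw [map_mul]
    have : a * b * Rack.toEnvelGroup Q x * (a * b)⁻¹
        = a * (b * Rack.toEnvelGroup Q x * b⁻¹) * a⁻¹ := by group
    rw [this, ihb, iha]
    rfl
  | inv a ha iha =>
    have := iha ((((QdlThetaG Q a)⁻¹ : QdlInn Q) : Equiv.Perm Q) x)
    rw [map_inv]
    have h2 : ((QdlThetaG Q a : Equiv.Perm Q))
        ((((QdlThetaG Q a)⁻¹ : QdlInn Q) : Equiv.Perm Q) x) = x := by
      simp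
    rw [h2] at this
    rw [← this]
    group

lemma z0_central {z : Rack.EnvelGroup Q} (hz : z ∈ QdlZ0 Q) (g : Rack.EnvelGroup Q) :
    z * g = g * z := by
  have hθ : QdlThetaG Q z = 1 := hz
  have hgen : ∀ x : Q, z * Rack.toEnvelGroup Q x = Rack.toEnvelGroup Q x * z := by
    intro x
    have := conj_tE z x
    rw [hθ] at this
    simp only [Subgroup.coe_one, Equiv.Perm.coe_one, id_eq] at this
    calc z * Rack.toEnvelGroup Q x = z * Rack.toEnvelGroup Q x * z⁻¹ * z := by group
    _ = Rack.toEnvelGroup Q x * z := by rw [this]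
  have hg : g ∈ Subgroup.closure
      (Set.range fun x : Q => (Rack.toEnvelGroup Q x : Rack.EnvelGroup Q)) := by
    rw [tE_gen]; trivial
  have : g ∈ Subgroup.centralizer {z} := by
    refine Subgroup.closure_le (Subgroup.centralizer {z}) |>.mpr ?_ hg
    rintro - ⟨x, rfl⟩
    simp only [SetLike.mem_coe, Subgroup.mem_centralizer_iff, Set.mem_singleton_iff]
    rintro h rfl
    exact hgen x
  exact Subgroup.mem_centralizer_iff.mp this z rfl

instance : CommGroup (QdlZ0 Q) :=
  { (inferInstance : Group (QdlZ0 Q)) with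
    mul_comm := fun a b => Subtype.ext (z0_central a.2 b.1) }

lemma thetaG_surj (u : QdlInn Q) : ∃ g : Rack.EnvelGroup Q, QdlThetaG Q g = u := by
  have hsub : Set.range (Rack.act' (R := Q)) ⊆
      ↑((QdlInn Q).subtype.comp (QdlThetaG Q)).range := by
    rintro - ⟨x, rfl⟩
    exact ⟨Rack.toEnvelGroup Q x, rfl⟩
  have h2 := (Subgroup.closure_le (((QdlInn Q).subtype.comp (QdlThetaG Q)).range)).mpr hsub
  have hu : (u : Equiv.Perm Q) ∈ Subgroup.closure (Set.range (Rack.act' (R := Q))) := u.2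
  obtain ⟨g, hg⟩ := h2 hu
  exact ⟨g, Subtype.ext hg⟩

noncomputable def ratExp : ℚ →+ Additive ℂˣ where
  toFun q := Additive.ofMul (Units.mk0 (Complex.exp (2 * Real.pi * Complex.I * q))
    (Complex.exp_ne_zero _))
  map_zero' := by
    apply congrArg Additive.ofMul
    ext
    simp
  map_add' a b := by
    show Additive.ofMul _ = Additive.ofMul (_ * _)
    apply congrArg Additive.ofMul
    ext
    show Complex.exp _ = Complex.exp _ * Complex.exp _
    rw [← Complex.exp_add]
    push_cast
    ring_nf

noncomputable def circExp : AddCircle (1 : ℚ) →+ Additive ℂˣ :=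
  QuotientAddGroup.lift _ ratExp (by
    rintro q ⟨k, rfl⟩
    show ratExp (k • (1 : ℚ)) = 0
    have hk : (k • (1 : ℚ)) = (k : ℚ) := by simp
    rw [hk]
    have h1 : (Units.mk0 (Complex.exp (2 * Real.pi * Complex.I * ((k : ℚ) : ℂ)))
        (Complex.exp_ne_zero _)) = 1 := by
      ext
      show Complex.exp _ = 1
      have h2 : (2 * (Real.pi : ℂ) * Complex.I * ((k : ℚ) : ℂ))
          = (k : ℤ) * (2 * Real.pi * Complex.I) := by
        push_cast; ring
      rw [h2, Complex.exp_int_mul_two_pi_mul_I]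
    have h3 : ratExp ((k : ℚ)) = Additive.ofMul (Units.mk0
        (Complex.exp (2 * Real.pi * Complex.I * ((k : ℚ) : ℂ))) (Complex.exp_ne_zero _)) := rfl
    rw [h3, h1]
    rfl)

lemma circExp_eq_zero {x : AddCircle (1 : ℚ)} (h : circExp x = 0) : x = 0 := by
  induction x using QuotientAddGroup.induction_on with
  | H q =>
    have hq : Complex.exp (2 * Real.pi * Complex.I * q) = 1 := by
      have := congrArg (fun t => (Additive.toMul t : ℂˣ)) h
      simpa [circExp, ratExp, Units.ext_iff] using this
    rw [Complex.exp_eq_one_iff] at hq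
    obtain ⟨n, hn⟩ := hq
    have h2 : ((q : ℂ)) = (n : ℂ) := by
      have hne : (2 * (Real.pi : ℂ) * Complex.I) ≠ 0 := by
        simp [Real.pi_ne_zero, Complex.I_ne_zero]
      apply mul_left_cancel₀ hne
      rw [hn]; ring
    have h3 : (q : ℚ) = (n : ℚ) := by exact_mod_cast h2
    show (q : AddCircle (1:ℚ)) = 0
    rw [h3]
    have : ((n:ℚ) : AddCircle (1:ℚ)) = ((n • (1:ℚ) : ℚ) : AddCircle (1:ℚ)) := by norm_num
    rw [this]
    exact (AddCircle.coe_eq_zero_iff _).mpr ⟨n, rfl⟩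

lemma freeAb_torsionfree {X : Type*} (m : Multiplicative (FreeAbelianGroup X))
    (h : IsOfFinOrder m) : m = 1 := by
  obtain ⟨n, hn, hmn⟩ := isOfFinOrder_iff_pow_eq_one.mp h
  have h1 : n • (Multiplicative.toAdd m) = 0 := by
    rw [← toAdd_pow, hmn]
    rfl
  have h2 : n • (FreeAbelianGroup.equivFinsupp X (Multiplicative.toAdd m)) = 0 := by
    rw [← map_nsmul, h1, map_zero]
  have h3 : (FreeAbelianGroup.equivFinsupp X (Multiplicative.toAdd m)) = 0 := by
    ext a
    have := congrArg (fun f => f a) h2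
    simp only [Finsupp.smul_apply, Finsupp.coe_zero, Pi.zero_apply, smul_eq_mul] at this
    have hn' : (n : ℤ) ≠ 0 := by exact_mod_cast hn.ne'
    exact by
      rcases mul_eq_zero.mp (by exact_mod_cast this) with h | h
      · exact absurd h hn'
      · exact h
  have h4 : Multiplicative.toAdd m = 0 :=
    (FreeAbelianGroup.equivFinsupp X).injective (by simp [h3])
  have : m = Multiplicative.ofAdd 0 := by
    rw [← h4]; rfl
  simpa using this

/-- Orbit quotient of the quandle. -/
def qOrb (Q : Type*) [Rack Q] : Type _ := Quot (fun a b : Q => ∃ x : Q, x ◃ a = b)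

/-- The shelf hom to the (multiplicative) free abelian group on the orbits. -/
def qAb (Q : Type*) [Rack Q] :
    ShelfHom Q (Quandle.Conj (Multiplicative (FreeAbelianGroup (qOrb Q)))) where
  toFun x := Multiplicative.ofAdd (FreeAbelianGroup.of (Quot.mk _ x))
  map_act' := by
    intro x y
    have h1 : (Quot.mk _ (x ◃ y) : qOrb Q) = Quot.mk _ y := (Quot.sound ⟨x, rfl⟩).symm
    show Multiplicative.ofAdd (FreeAbelianGroup.of (Quot.mk _ (x ◃ y) : qOrb Q))
        = Multiplicative.ofAdd (FreeAbelianGroup.of (Quot.mk _ x : qOrb Q))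
          * Multiplicative.ofAdd (FreeAbelianGroup.of (Quot.mk _ y : qOrb Q))
          * (Multiplicative.ofAdd (FreeAbelianGroup.of (Quot.mk _ x : qOrb Q)))⁻¹
    rw [h1, mul_comm (Multiplicative.ofAdd (FreeAbelianGroup.of (Quot.mk _ x : qOrb Q))),
      mul_inv_cancel_right]

/-- The induced hom to the free abelian group on orbits. -/
def qF (Q : Type*) [Rack Q] :
    Rack.EnvelGroup Q →* Multiplicative (FreeAbelianGroup (qOrb Q)) :=
  Rack.toEnvelGroup.map (qAb Q)

lemma central_sandwich {G : Type*} [Group G] {w t : G} (hw : w * t = t * w) (g u v : G) :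
    (g * t⁻¹) * w * (t * u * v⁻¹) = g * w * u * v⁻¹ := by
  calc (g * t⁻¹) * w * (t * u * v⁻¹) = g * t⁻¹ * (w * t) * (u * v⁻¹) := by group
  _ = g * t⁻¹ * (t * w) * (u * v⁻¹) := by rw [hw]
  _ = g * w * u * v⁻¹ := by group

lemma central_sandwich2 {G : Type*} [Group G] {w t : G} (hw : w * t = t * w) (u v : G) :
    t * (w * u) * v = w * (t * u * v) := by
  calc t * (w * u) * v = (t * w) * u * v := by group
  _ = (w * t) * u * v := by rw [← hw]
  _ = w * (t * u * v) := by group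

end Stmt17Aux

open Stmt17Aux in
/-- if every `ℂˣ`-valued 2-cocycle on `Inn(Q)` is a 2-coboundary (`Q` finite),
then `Z₀ = ker θ_{G(Q)}` is torsion-free. -/
theorem stmt17 (Q : Type*) [Quandle Q] [Finite Q]
    (hschur : ∀ α : QdlInn Q → QdlInn Q → ℂˣ,
      (∀ g h k : QdlInn Q, α g h * α (g * h) k = α h k * α g (h * k)) →
      ∃ β : QdlInn Q → ℂˣ, ∀ g h : QdlInn Q, α g h = β g * β h * (β (g * h))⁻¹) :
    ∀ z ∈ QdlZ0 Q, IsOfFinOrder z → z = 1 := by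
  classical
  intro z hz hord
  by_contra hne
  -- a character of Z₀ not vanishing at z
  have hzz : (⟨z, hz⟩ : QdlZ0 Q) ≠ 1 := by
    intro h; exact hne (congrArg Subtype.val h)
  have hzz' : (Additive.ofMul (⟨z, hz⟩ : QdlZ0 Q)) ≠ 0 := by
    intro h; exact hzz (by simpa using congrArg Additive.toMul h)
  obtain ⟨c, hc⟩ := CharacterModule.exists_character_apply_ne_zero_of_ne_zero hzz'
  let lam : (QdlZ0 Q) →* ℂˣ := MonoidHom.mk'
    (fun w => Additive.toMul (circExp (c (Additive.ofMul w)))) (by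
      intro a b
      show Additive.toMul (circExp (c (Additive.ofMul (a * b)))) = _
      have h1 : Additive.ofMul (a * b) = Additive.ofMul a + Additive.ofMul b := rfl
      rw [h1, map_add, map_add, toMul_add])
  have hlam : lam ⟨z, hz⟩ ≠ 1 := by
    intro h
    apply hc
    apply circExp_eq_zero
    have : Additive.toMul (circExp (c (Additive.ofMul (⟨z, hz⟩ : QdlZ0 Q)))) = 1 := h
    exact (by simpa using congrArg Additive.ofMul this)
  -- a set-theoretic section of θ
  choose s hs using thetaG_surj (Q := Q)
  have hcen : ∀ (w : QdlZ0 Q) (g : Rack.EnvelGroup Q),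
      (w : Rack.EnvelGroup Q) * g = g * w := fun w g => z0_central w.2 g
  have hfmem : ∀ g h : QdlInn Q, s g * s h * (s (g * h))⁻¹ ∈ QdlZ0 Q := by
    intro g h
    show _ ∈ (QdlThetaG Q).ker
    rw [MonoidHom.mem_ker, map_mul, map_mul, map_inv, hs, hs, hs, mul_inv_cancel]
  let F2 : QdlInn Q → QdlInn Q → (QdlZ0 Q) := fun g h => ⟨s g * s h * (s (g * h))⁻¹, hfmem g h⟩
  let α : QdlInn Q → QdlInn Q → ℂˣ := fun g h => lam (F2 g h)
  have hcoc : ∀ g h k, α g h * α (g * h) k = α h k * α g (h * k) := by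
    intro g h k
    have hw : (s h * s k * (s (h * k))⁻¹) * s g = s g * (s h * s k * (s (h * k))⁻¹) :=
      hcen (F2 h k) (s g)
    have hid : F2 g h * F2 (g * h) k = F2 h k * F2 g (h * k) := by
      apply Subtype.ext
      show (s g * s h * (s (g * h))⁻¹) * (s (g * h) * s k * (s (g * h * k))⁻¹)
          = (s h * s k * (s (h * k))⁻¹) * (s g * s (h * k) * (s (g * (h * k)))⁻¹)
      rw [mul_assoc g h k]
      have e0 : (s g * s h * (s (g * h))⁻¹) * (s (g * h) * s k * (s (g * (h * k)))⁻¹)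
          = s g * ((s h * s k * (s (h * k))⁻¹) * s (h * k)) * (s (g * (h * k)))⁻¹ := by
        group
      rw [e0, central_sandwich2 hw]
    calc α g h * α (g * h) k = lam (F2 g h * F2 (g * h) k) := (map_mul lam _ _).symm
      _ = lam (F2 h k * F2 g (h * k)) := by rw [hid]
      _ = α h k * α g (h * k) := map_mul lam _ _
  obtain ⟨β, hβ⟩ := hschur α hcoc
  -- the homomorphism φ : G(Q) → ℂˣ
  have hamem : ∀ g : Rack.EnvelGroup Q, g * (s (QdlThetaG Q g))⁻¹ ∈ QdlZ0 Q := by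
    intro g
    show _ ∈ (QdlThetaG Q).ker
    rw [MonoidHom.mem_ker, map_mul, map_inv, hs, mul_inv_cancel]
  let av : Rack.EnvelGroup Q → (QdlZ0 Q) := fun g => ⟨g * (s (QdlThetaG Q g))⁻¹, hamem g⟩
  have hkey : ∀ g h : Rack.EnvelGroup Q,
      av (g * h) = av g * av h * F2 (QdlThetaG Q g) (QdlThetaG Q h) := by
    intro g h
    apply Subtype.ext
    show g * h * (s (QdlThetaG Q (g * h)))⁻¹
        = (g * (s (QdlThetaG Q g))⁻¹) * (h * (s (QdlThetaG Q h))⁻¹)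
          * (s (QdlThetaG Q g) * s (QdlThetaG Q h)
            * (s (QdlThetaG Q g * QdlThetaG Q h))⁻¹)
    rw [map_mul]
    have hw : (h * (s (QdlThetaG Q h))⁻¹) * s (QdlThetaG Q g)
        = s (QdlThetaG Q g) * (h * (s (QdlThetaG Q h))⁻¹) := hcen (av h) (s (QdlThetaG Q g))
    have e1 : (g * (s (QdlThetaG Q g))⁻¹) * (h * (s (QdlThetaG Q h))⁻¹)
          * (s (QdlThetaG Q g) * s (QdlThetaG Q h)
            * (s (QdlThetaG Q g * QdlThetaG Q h))⁻¹)
        = (g * (s (QdlThetaG Q g))⁻¹) * ((h * (s (QdlThetaG Q h))⁻¹) * s (QdlThetaG Q g))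
          * (s (QdlThetaG Q h) * (s (QdlThetaG Q g * QdlThetaG Q h))⁻¹) := by
      group
    rw [e1, hw]
    group
  let φ : Rack.EnvelGroup Q →* ℂˣ := MonoidHom.mk'
    (fun g => lam (av g) * β (QdlThetaG Q g)) (by
      intro g h
      show lam (av (g * h)) * β (QdlThetaG Q (g * h)) = _
      rw [hkey, map_mul, map_mul]
      have h1 : lam (F2 (QdlThetaG Q g) (QdlThetaG Q h))
          = α (QdlThetaG Q g) (QdlThetaG Q h) := rfl
      rw [h1, hβ, map_mul]
      rw [Units.ext_iff]
      simp only [Units.val_mul, Units.val_inv_eq_inv_val]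
      field_simp)
  have hθz : QdlThetaG Q z = 1 := hz
  have hφz : φ z = lam ⟨z, hz⟩ := by
    have h1 : av z = (⟨z, hz⟩ : QdlZ0 Q) * av 1 := by
      apply Subtype.ext
      show z * (s (QdlThetaG Q z))⁻¹ = z * (1 * (s (QdlThetaG Q 1))⁻¹)
      rw [map_one, hθz, one_mul]
    have h3 : lam (av 1) * β (QdlThetaG Q 1) = 1 := map_one φ
    rw [map_one] at h3
    show lam (av z) * β (QdlThetaG Q z) = _
    rw [hθz, h1, map_mul, mul_assoc, h3, mul_one]
  -- φ kills torsion since it factors through the free abelian group on orbits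
  let χ : qOrb Q → ℂˣ := Quot.lift (fun x => φ (Rack.toEnvelGroup Q x)) (by
    rintro a b ⟨x, rfl⟩
    show φ (Rack.toEnvelGroup Q a) = φ (Rack.toEnvelGroup Q (x ◃ a))
    have h1 : Rack.toEnvelGroup Q (x ◃ a) =
        Rack.toEnvelGroup Q x * Rack.toEnvelGroup Q a * (Rack.toEnvelGroup Q x)⁻¹ :=
      (Rack.toEnvelGroup Q).map_act' (x := x) (y := a)
    rw [h1, map_mul, map_mul, map_inv,
      mul_comm (φ (Rack.toEnvelGroup Q x)) (φ (Rack.toEnvelGroup Q a)), mul_inv_cancel_right])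
  let L : FreeAbelianGroup (qOrb Q) →+ Additive ℂˣ :=
    FreeAbelianGroup.lift (fun o => Additive.ofMul (χ o))
  let ψ : Multiplicative (FreeAbelianGroup (qOrb Q)) →* ℂˣ :=
    MonoidHom.mk' (fun m => Additive.toMul (L (Multiplicative.toAdd m))) (by
      intro a b
      show Additive.toMul (L (Multiplicative.toAdd (a * b))) = _
      have h1 : Multiplicative.toAdd (a * b)
          = Multiplicative.toAdd a + Multiplicative.toAdd b := rfl
      rw [h1, map_add, toMul_add])
  have hagree : ∀ g : Rack.EnvelGroup Q, ψ (qF Q g) = φ g := by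
    intro g
    have hg : g ∈ Subgroup.closure
        (Set.range fun x : Q => (Rack.toEnvelGroup Q x : Rack.EnvelGroup Q)) := by
      rw [tE_gen]; trivial
    induction hg using Subgroup.closure_induction with
    | mem g hg =>
      obtain ⟨x, rfl⟩ := hg
      show ψ (qF Q (Rack.toEnvelGroup Q x)) = φ (Rack.toEnvelGroup Q x)
      have h1 : qF Q (Rack.toEnvelGroup Q x)
          = Multiplicative.ofAdd (FreeAbelianGroup.of (Quot.mk _ x)) := rfl
      rw [h1]
      show Additive.toMul (L (Multiplicative.toAdd
        (Multiplicative.ofAdd (FreeAbelianGroup.of (Quot.mk _ x))))) = _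
      rw [toAdd_ofAdd]
      have h2 : L (FreeAbelianGroup.of (Quot.mk _ x))
          = Additive.ofMul (χ (Quot.mk _ x)) := FreeAbelianGroup.lift_apply_of _ _
      rw [h2]
      rfl
    | one => simp only [map_one]
    | mul a b ha hb iha ihb => rw [map_mul, map_mul, map_mul, iha, ihb]
    | inv a ha iha => rw [map_inv, map_inv, map_inv, iha]
  have hfin : IsOfFinOrder (qF Q z) := (qF Q).isOfFinOrder hord
  have hqz : qF Q z = 1 := freeAb_torsionfree _ hfin
  have hone : φ z = 1 := by rw [← hagree z, hqz, map_one]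
  rw [hφz] at hone
  exact hlam hone
end
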